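/- Fix i ∈ ℕ and let w = a_1 a_2 ⋯ a_k be a word in which each letter a_s equals x_{r_s}^{ε_s} with ε_s ∈ {1, −1} and r_s ≥ i for all s. If w represents the identity element of Thompson's group F, then the exponent sum of x_i in w is zero, i.e. Σ_{s : r_s = i} ε_s = 0. -/

import Mathlib

/-- The relators of Thompson's group `F` in its standard infinite presentation
`⟨x_0, x_1, x_2, … ∣ x_i⁻¹ x_j x_i = x_{j+1} for i < j⟩`. -/
def ThompsonRels : Set (FreeGroup ℕ) :=
  {r | ∃ i j : ℕ, i < j ∧
    r = (FreeGroup.of i)⁻¹ * FreeGroup.of j * FreeGroup.of i * (FreeGroup.of (j + 1))⁻¹}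

/-- Thompson's group `F`, as the presented group on the above relators. -/
abbrev ThompsonF : Type := PresentedGroup ThompsonRels

/-- The generator `x_k` of Thompson's group `F`. -/
def xF (k : ℕ) : ThompsonF := PresentedGroup.of k


namespace ThompsonAux

/-- prepend a bit -/
def cns (b : Bool) (s : ℕ → Bool) : ℕ → Bool := fun n => Nat.casesOn n b s

def tl (s : ℕ → Bool) : ℕ → Bool := fun n => s (n + 1)

@[simp] lemma cns_zero (b : Bool) (s : ℕ → Bool) : cns b s 0 = b := rfl
@[simp] lemma cns_succ (b : Bool) (s : ℕ → Bool) (n : ℕ) : cns b s (n + 1) = s n := rfl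
@[simp] lemma tl_cns (b : Bool) (s : ℕ → Bool) : tl (cns b s) = s := rfl
lemma cns_eta (s : ℕ → Bool) : cns (s 0) (tl s) = s := by
  funext n; cases n <;> rfl

/-- the generator `x_n` as a map on binary sequences -/
def fwd : ℕ → (ℕ → Bool) → (ℕ → Bool)
  | 0, s => if s 0 then (if s 1 then tl s else cns false (cns true (tl (tl s))))
      else cns false s
  | (n+1), s => if s 0 then cns true (fwd n (tl s)) else s

def bwd : ℕ → (ℕ → Bool) → (ℕ → Bool)
  | 0, s => if s 0 then cns true s
      else (if s 1 then cns true (cns false (tl (tl s))) else tl s)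
  | (n+1), s => if s 0 then cns true (bwd n (tl s)) else s

lemma bwd_fwd (n : ℕ) (s : ℕ → Bool) : bwd n (fwd n s) = s := by
  induction n generalizing s with
  | zero =>
    rcases h0 : s 0 <;> rcases h1 : s 1 <;>
      simp [fwd, bwd, h0, h1, tl] <;>
    · funext m
      rcases m with _ | m
      · simp [h0]
      · rcases m with _ | m <;> simp [h1, tl]
  | succ n ih =>
    rcases h0 : s 0 with _ | _
    · simp [fwd, bwd, h0]
    · simp [fwd, bwd, h0, ih]
      rw [show cns true (tl s) = cns (s 0) (tl s) by rw [h0], cns_eta]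

lemma fwd_bwd (n : ℕ) (s : ℕ → Bool) : fwd n (bwd n s) = s := by
  induction n generalizing s with
  | zero =>
    rcases h0 : s 0 <;> rcases h1 : s 1 <;>
      simp [fwd, bwd, h0, h1, tl] <;>
    · funext m
      rcases m with _ | m
      · simp [h0]
      · rcases m with _ | m <;> simp [h1, tl]
  | succ n ih =>
    rcases h0 : s 0 with _ | _
    · simp [fwd, bwd, h0]
    · simp [fwd, bwd, h0, ih]
      rw [show cns true (tl s) = cns (s 0) (tl s) by rw [h0], cns_eta]

lemma fwd_succ_pos (n : ℕ) (s : ℕ → Bool) (h : s 0 = true) :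
    fwd (n+1) s = cns true (fwd n (tl s)) := by simp [fwd, h]

lemma fwd_succ_neg (n : ℕ) (s : ℕ → Bool) (h : s 0 = false) :
    fwd (n+1) s = s := by simp [fwd, h]

lemma fwd0_ff (s : ℕ → Bool) (h : s 0 = false) : fwd 0 s = cns false s := by
  simp [fwd, h]

lemma fwd0_tf (s : ℕ → Bool) (h0 : s 0 = true) (h1 : s 1 = false) :
    fwd 0 s = cns false (cns true (tl (tl s))) := by simp [fwd, h0, h1]

lemma fwd0_tt (s : ℕ → Bool) (h0 : s 0 = true) (h1 : s 1 = true) :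
    fwd 0 s = tl s := by simp [fwd, h0, h1]

lemma comm_fwd : ∀ (a b : ℕ) (s : ℕ → Bool), a < b →
    fwd b (fwd a s) = fwd a (fwd (b+1) s) := by
  intro a
  induction a with
  | zero =>
    intro b s hb
    obtain ⟨b, rfl⟩ : ∃ b', b = b' + 1 := ⟨b - 1, by omega⟩
    rcases h0 : s 0 with _ | _
    · rw [fwd0_ff s h0, fwd_succ_neg b _ (by simp), fwd_succ_neg (b+1) s h0,
        fwd0_ff s h0]
    · rcases h1 : s 1 with _ | _
      · have ht : tl s 0 = false := h1
        rw [fwd0_tf s h0 h1, fwd_succ_neg b _ (by simp),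
          fwd_succ_pos (b+1) s h0, fwd_succ_neg b _ ht,
          show cns true (tl s) = s by rw [← h0]; exact cns_eta s,
          fwd0_tf s h0 h1]
      · have ht : tl s 0 = true := h1
        rw [fwd0_tt s h0 h1, fwd_succ_pos b _ ht,
          fwd_succ_pos (b+1) s h0, fwd_succ_pos b _ ht,
          fwd0_tt _ (by simp) (by simp)]
        simp
  | succ a ih =>
    intro b s hb
    obtain ⟨b, rfl⟩ : ∃ b', b = b' + 1 := ⟨b - 1, by omega⟩
    rcases h0 : s 0 with _ | _
    · rw [fwd_succ_neg a s h0, fwd_succ_neg b s h0, fwd_succ_neg (b+1) s h0,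
        fwd_succ_neg a s h0]
    · rw [fwd_succ_pos a s h0, fwd_succ_pos b _ (by simp),
        fwd_succ_pos (b+1) s h0, fwd_succ_pos a _ (by simp)]
      simp [ih b (tl s) (by omega)]

/-- the generator `x_n` as a permutation of binary sequences -/
def X (n : ℕ) : Equiv.Perm (ℕ → Bool) :=
  ⟨fwd n, bwd n, fun s => bwd_fwd n s, fun s => fwd_bwd n s⟩

@[simp] lemma X_apply (n : ℕ) (s : ℕ → Bool) : X n s = fwd n s := rfl

lemma relsX : ∀ r ∈ ThompsonRels, FreeGroup.lift X r = 1 := by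
  rintro r ⟨a, b, hab, rfl⟩
  simp only [map_mul, map_inv, FreeGroup.lift_apply_of]
  rw [mul_inv_eq_one, mul_assoc, inv_mul_eq_iff_eq_mul]
  ext s
  simp only [Equiv.Perm.coe_mul, Function.comp_apply, X_apply]
  exact congrFun (comm_fwd a b s hab) _

def Φ : ThompsonF →* Equiv.Perm (ℕ → Bool) := PresentedGroup.toGroup relsX

@[simp] lemma Φ_xF (n : ℕ) : Φ (xF n) = X n := PresentedGroup.toGroup.of relsX

/-- the sequence `1^i 0^m η` -/
def seqF (i m : ℕ) (η : ℕ → Bool) : ℕ → Bool :=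
  fun n => if n < i then true else if n < i + m then false else η (n - (i + m))

lemma seqF_succ_i (i m : ℕ) (η : ℕ → Bool) :
    seqF (i+1) m η = cns true (seqF i m η) := by
  funext n
  rcases n with _ | n
  · simp [seqF]
  · simp only [seqF, cns_succ]
    have h1 : n + 1 < i + 1 ↔ n < i := by omega
    have h2 : n + 1 < i + 1 + m ↔ n < i + m := by omega
    have h3 : n + 1 - (i + 1 + m) = n - (i + m) := by omega
    rw [h3]; simp only [h1, h2]

lemma seqF_zero_succ (m : ℕ) (η : ℕ → Bool) :
    seqF 0 (m+1) η = cns false (seqF 0 m η) := by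
  funext n
  rcases n with _ | n
  · simp [seqF]
  · simp only [seqF, cns_succ]
    have h2 : n + 1 < 0 + (m + 1) ↔ n < 0 + m := by omega
    have h3 : n + 1 - (0 + (m + 1)) = n - (0 + m) := by omega
    rw [h3]; simp only [h2]; simp

lemma fwd_seqF_ne : ∀ (i j m : ℕ) (η : ℕ → Bool), i < j →
    fwd j (seqF i (m+1) η) = seqF i (m+1) η := by
  intro i
  induction i with
  | zero =>
    intro j m η hj
    obtain ⟨j, rfl⟩ : ∃ j', j = j' + 1 := ⟨j - 1, by omega⟩
    have h0 : seqF 0 (m+1) η 0 = false := by simp [seqF]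
    simp [fwd, h0]
  | succ i ih =>
    intro j m η hj
    obtain ⟨j, rfl⟩ : ∃ j', j = j' + 1 := ⟨j - 1, by omega⟩
    rw [seqF_succ_i, fwd_succ_pos j _ (by simp)]
    simp [ih j m η (by omega)]

lemma fwd_seqF_eq : ∀ (i m : ℕ) (η : ℕ → Bool),
    fwd i (seqF i (m+1) η) = seqF i (m+2) η := by
  intro i
  induction i with
  | zero =>
    intro m η
    rw [seqF_zero_succ]
    simp [fwd]
    rw [← seqF_zero_succ, ← seqF_zero_succ]
  | succ i ih =>
    intro m η
    rw [seqF_succ_i, seqF_succ_i]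
    simp [fwd, ih]

lemma X_seqF_ne (i j m : ℕ) (η : ℕ → Bool) (hj : i < j) :
    X j (seqF i (m+1) η) = seqF i (m+1) η := fwd_seqF_ne i j m η hj

lemma X_symm_seqF_ne (i j m : ℕ) (η : ℕ → Bool) (hj : i < j) :
    (X j)⁻¹ (seqF i (m+1) η) = seqF i (m+1) η := by
  conv_lhs => rw [← X_seqF_ne i j m η hj]
  exact Equiv.symm_apply_apply _ _

lemma X_symm_seqF_eq (i m : ℕ) (η : ℕ → Bool) :
    (X i)⁻¹ (seqF i (m+2) η) = seqF i (m+1) η := by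
  conv_lhs => rw [← fwd_seqF_eq i m η]
  exact Equiv.symm_apply_apply _ _


def csum (i : ℕ) (l : List (ℕ × ℤ)) : ℤ :=
  (l.map fun p => if p.1 = i then p.2 else 0).sum

@[simp] lemma csum_nil (i : ℕ) : csum i [] = 0 := rfl

lemma csum_cons (i : ℕ) (p : ℕ × ℤ) (l : List (ℕ × ℤ)) :
    csum i (p :: l) = (if p.1 = i then p.2 else 0) + csum i l := by
  simp [csum]

lemma csum_bound (i : ℕ) : ∀ l : List (ℕ × ℤ), (∀ p ∈ l, p.2 = 1 ∨ p.2 = -1) →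
    -(l.length : ℤ) ≤ csum i l ∧ csum i l ≤ l.length := by
  intro l
  induction l with
  | nil => simp
  | cons p l ih =>
    intro h
    have hp := h p (by simp)
    have hl := ih (fun q hq => h q (List.mem_cons_of_mem p hq))
    rw [csum_cons]
    simp only [List.length_cons]
    push_cast
    rcases hp with hp | hp <;> rw [hp] <;> split <;> omega

lemma main_lemma (i : ℕ) : ∀ l : List (ℕ × ℤ),
    (∀ p ∈ l, (p.2 = 1 ∨ p.2 = -1) ∧ i ≤ p.1) →
    ∀ m : ℕ, l.length + 1 ≤ m → ∀ η : ℕ → Bool,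
    (l.map (fun p => X p.1 ^ p.2)).prod (seqF i m η)
      = seqF i ((m + csum i l).toNat) η := by
  intro l
  induction l with
  | nil =>
    intro _ m _ η
    simp
  | cons p l ih =>
    intro h m hm η
    have hp := h p (by simp)
    have hl : ∀ q ∈ l, (q.2 = 1 ∨ q.2 = -1) ∧ i ≤ q.1 :=
      fun q hq => h q (List.mem_cons_of_mem p hq)
    have hlen : l.length + 1 ≤ m := by simp at hm; omega
    have hb := csum_bound i l (fun q hq => (hl q hq).1)
    have hnn : (0:ℤ) ≤ (m:ℤ) + csum i l := by
      simp only [List.length_cons] at hm; omega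
    have hM2 : 2 ≤ ((m:ℤ) + csum i l).toNat := by
      simp only [List.length_cons] at hm; omega
    obtain ⟨t, ht⟩ : ∃ t, ((m:ℤ) + csum i l).toNat = t + 2 :=
      ⟨((m:ℤ) + csum i l).toNat - 2, by omega⟩
    rw [List.map_cons, List.prod_cons, Equiv.Perm.mul_apply, ih hl m hlen η, ht]
    rcases Nat.eq_or_lt_of_le (hp.2) with hpi | hpi
    · rcases hp.1 with hε | hε <;> rw [hε]
      · have hidx : ((m:ℤ) + csum i (p :: l)).toNat = (t + 1) + 2 := by
          rw [csum_cons, if_pos hpi.symm, hε]; omega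
        rw [zpow_one, ← hpi, show t + 2 = (t+1) + 1 from rfl, X_apply,
          fwd_seqF_eq, hidx]
      · have hidx : ((m:ℤ) + csum i (p :: l)).toNat = t + 1 := by
          rw [csum_cons, if_pos hpi.symm, hε]; omega
        rw [zpow_neg_one, ← hpi, X_symm_seqF_eq, hidx]
    · have hcs : csum i (p :: l) = csum i l := by
        rw [csum_cons, if_neg (by omega)]; ring
      rcases hp.1 with hε | hε <;> rw [hε]
      · rw [zpow_one, show t + 2 = (t+1) + 1 from rfl, X_apply,
          fwd_seqF_ne i p.1 (t+1) η hpi, hcs, ← ht]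
      · rw [zpow_neg_one, show t + 2 = (t+1) + 1 from rfl,
          X_symm_seqF_ne i p.1 (t+1) η hpi, hcs, ← ht]

lemma seqF_inj (i m m' : ℕ)
    (h : seqF i m (fun _ => true) = seqF i m' (fun _ => true)) : m = m' := by
  rcases Nat.lt_trichotomy m m' with hlt | heq | hlt
  · have h1 := congrFun h (i + m)
    simp only [seqF] at h1
    rw [if_neg (by omega), if_neg (by omega), if_neg (by omega),
      if_pos (by omega)] at h1
    simp at h1
  · exact heq
  · have h1 := congrFun h (i + m')
    simp only [seqF] at h1
    rw [if_neg (by omega), if_pos (by omega), if_neg (by omega)] at h1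
    simp at h1

end ThompsonAux


open ThompsonAux

/-- If `w = a_1 ⋯ a_k` is a word in which each letter `a_s` is `x_{r_s}^{ε_s}` with
`ε_s = ±1` and `r_s ≥ i` for all `s`, and `w` represents the identity of Thompson's
group `F`, then the exponent sum of `x_i` in `w` is zero. -/
theorem exponent_sum_eq_zero_of_eq_one (i k : ℕ)
    (r : Fin k → ℕ) (ε : Fin k → ℤ) (hε : ∀ s : Fin k, ε s = 1 ∨ ε s = -1)
    (hr : ∀ s : Fin k, i ≤ r s)
    (hw : (List.ofFn (fun s : Fin k => xF (r s) ^ ε s)).prod = 1) :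
    (∑ s : Fin k, if r s = i then ε s else 0) = 0 := by
  set l : List (ℕ × ℤ) := List.ofFn (fun s : Fin k => (r s, ε s)) with hl_def
  have hl : ∀ p ∈ l, (p.2 = 1 ∨ p.2 = -1) ∧ i ≤ p.1 := by
    intro p hp
    rw [hl_def, List.mem_ofFn] at hp
    obtain ⟨s, rfl⟩ := hp
    exact ⟨hε s, hr s⟩
  have hmap : l.map (fun p => X p.1 ^ p.2)
      = List.ofFn (fun s : Fin k => X (r s) ^ ε s) := by
    rw [hl_def, List.map_ofFn]; rfl
  have hΦ : (l.map (fun p => X p.1 ^ p.2)).prod = 1 := by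
    have h1 := congrArg Φ hw
    rw [map_one, map_list_prod, List.map_ofFn] at h1
    rw [hmap, ← h1]
    congr 1
    exact congrArg List.ofFn (funext fun s => by simp [Function.comp_apply, map_zpow])
  have hlen : l.length = k := by rw [hl_def, List.length_ofFn]
  have key := main_lemma i l hl (k + 1) (by omega) (fun _ => true)
  rw [hΦ, Equiv.Perm.one_apply] at key
  have hinj := seqF_inj i (k + 1) (((k + 1 : ℕ) : ℤ) + csum i l).toNat key
  have hb := csum_bound i l (fun p hp => (hl p hp).1)
  have hc0 : csum i l = 0 := by omega
  have hsum : csum i l = ∑ s : Fin k, if r s = i then ε s else 0 := by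
    rw [hl_def]
    unfold csum
    rw [List.map_ofFn]
    rw [show ((fun p : ℕ × ℤ => if p.1 = i then p.2 else 0) ∘
        fun s : Fin k => (r s, ε s)) = fun s : Fin k => if r s = i then ε s else 0
      from rfl]
    exact List.sum_ofFn
  rw [← hsum, hc0]
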